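/- For integers n > 1 and even m ≥ 4, χ_ld(C_m[\overline{K_n}]) = 2, where C_m is the cycle on m vertices. -/

import Mathlib

open Finset

open Classical in
/-- The weight of a vertex: sum of labels of its neighbors. -/
noncomputable def ldWeight {V : Type*} (G : SimpleGraph V) [Fintype V] (f : V → ℕ) (v : V) : ℕ :=
  ∑ x ∈ Finset.univ, if G.Adj v x then f x else 0

/-- `f` is a local distance antimagic labeling of `G`: a bijection onto `{1,…,|V|}`
with adjacent vertices getting distinct weights. -/
def IsLDAL {V : Type*} (G : SimpleGraph V) [Fintype V] (f : V → ℕ) : Prop :=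
  Set.BijOn f Set.univ (Set.Icc 1 (Fintype.card V)) ∧
    ∀ ⦃u v : V⦄, G.Adj u v → ldWeight G f u ≠ ldWeight G f v

/-- The local distance antimagic chromatic number: minimum number of distinct weights. -/
noncomputable def chiLD {V : Type*} (G : SimpleGraph V) [Fintype V] : ℕ :=
  sInf {k | ∃ f : V → ℕ, IsLDAL G f ∧ (Finset.univ.image (ldWeight G f)).card = k}

/-- The join `G + H` of two graphs. -/
def graphJoin {α β : Type*} (G : SimpleGraph α) (H : SimpleGraph β) :
    SimpleGraph (α ⊕ β) where
  Adj x y :=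
    match x, y with
    | Sum.inl a, Sum.inl b => G.Adj a b
    | Sum.inr a, Sum.inr b => H.Adj a b
    | Sum.inl _, Sum.inr _ => True
    | Sum.inr _, Sum.inl _ => True
  symm := by
    constructor
    rintro (a | a) (b | b) h
    exacts [G.symm.symm _ _ h, trivial, trivial, H.symm.symm _ _ h]
  loopless := by
    constructor
    rintro (a | a) h
    exacts [G.loopless.irrefl a h, H.loopless.irrefl a h]

/-- The lexicographic product `G[H]`. -/
def lexProd {α β : Type*} (G : SimpleGraph α) (H : SimpleGraph β) :
    SimpleGraph (α × β) where
  Adj x y := G.Adj x.1 y.1 ∨ (x.1 = y.1 ∧ H.Adj x.2 y.2)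
  symm := by
    constructor
    rintro x y (h | ⟨e, h⟩)
    exacts [Or.inl h.symm, Or.inr ⟨e.symm, h.symm⟩]
  loopless := by
    constructor
    rintro x (h | ⟨e, h⟩)
    exacts [G.loopless.irrefl _ h, H.loopless.irrefl _ h]

/-- The friendship graph `F_n`: `n` triangles sharing the central vertex `none`. -/
def friendship (n : ℕ) : SimpleGraph (Option (Fin n × Fin 2)) where
  Adj x y := x ≠ y ∧ (x = none ∨ y = none ∨ ∃ i a b, x = some (i, a) ∧ y = some (i, b))
  symm := by
    constructor
    rintro x y ⟨hne, h⟩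
    refine ⟨hne.symm, ?_⟩
    rcases h with h | h | ⟨i, a, b, hx, hy⟩
    · exact Or.inr (Or.inl h)
    · exact Or.inl h
    · exact Or.inr (Or.inr ⟨i, b, a, hy, hx⟩)
  loopless := ⟨fun x h => h.1 rfl⟩

/-- The bistar `B_{n,n}`: two adjacent centers, each with `n` leaves. -/
def bistar (n : ℕ) : SimpleGraph (Bool ⊕ Bool × Fin n) where
  Adj x y :=
    match x, y with
    | Sum.inl a, Sum.inl b => a ≠ b
    | Sum.inl a, Sum.inr (c, _) => a = c
    | Sum.inr (c, _), Sum.inl a => a = c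
    | Sum.inr _, Sum.inr _ => False
  symm := by
    constructor
    rintro (a | ⟨c, i⟩) (b | ⟨d, j⟩) h
    exacts [h.symm, h, h, h.elim]
  loopless := by
    constructor
    rintro (a | ⟨c, i⟩) h
    exacts [h rfl, h]



lemma eucl_aux {m a b x y : ℕ} (hm : 0 < m) (hx : x < m) (hy : y < m)
    (h : m * a + x = m * b + y) : a = b ∧ x = y := by
  have ha : (m * a + x) / m = a := by
    rw [Nat.mul_add_div hm, Nat.div_eq_of_lt hx, Nat.add_zero]
  have hb : (m * b + y) / m = b := by
    rw [Nat.mul_add_div hm, Nat.div_eq_of_lt hy, Nat.add_zero]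
  have hab : a = b := by rw [← ha, ← hb, h]
  subst hab
  exact ⟨rfl, Nat.add_left_cancel h⟩

lemma sum_pairs (F : ℕ → ℕ) (C : ℕ) :
    ∀ t : ℕ, (∀ s, s < t → F (2*s) + F (2*s+1) = C) →
      ∑ j ∈ Finset.range (2*t), F j = t * C := by
  intro t
  induction t with
  | zero => simp
  | succ t ih =>
    intro h
    have h2 : 2 * (t+1) = (2*t + 1) + 1 := by ring
    rw [h2, Finset.sum_range_succ, Finset.sum_range_succ,
      ih (fun s hs => h s (by omega)), add_assoc, h t (by omega), Nat.succ_mul]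

lemma bijOn_of_BR {m n : ℕ} (hm : 0 < m) (hn : 0 < n) (B : ℕ → ℕ) (R : ℕ → ℕ → ℕ)
    (hBlt : ∀ j, j < n → B j < n)
    (hBinj : ∀ j1, j1 < n → ∀ j2, j2 < n → B j1 = B j2 → j1 = j2)
    (hRlt : ∀ u j, u < m → j < n → R u j < m)
    (hRinj : ∀ j, j < n → ∀ u1, u1 < m → ∀ u2, u2 < m → R u1 j = R u2 j → u1 = u2) :
    Set.BijOn (fun x : Fin m × Fin n => m * B x.2.val + R x.1.val x.2.val + 1)
      Set.univ (Set.Icc 1 (m * n)) := by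
  set f := fun x : Fin m × Fin n => m * B x.2.val + R x.1.val x.2.val + 1 with hf
  have hmem : ∀ x : Fin m × Fin n, f x ∈ Set.Icc 1 (m * n) := by
    rintro ⟨u, j⟩
    have h1 : B j.val < n := hBlt _ j.isLt
    have h2 : R u.val j.val < m := hRlt _ _ u.isLt j.isLt
    have h3 : m * B j.val ≤ m * (n - 1) := Nat.mul_le_mul_left m (by omega)
    have h4 : m * (n - 1) + m = m * n := by
      cases n with
      | zero => omega
      | succ k => simp [Nat.mul_succ]
    constructor
    · exact Nat.le_add_left 1 _
    · show m * B j.val + R u.val j.val + 1 ≤ m * n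
      calc m * B j.val + R u.val j.val + 1
          ≤ m * (n - 1) + ((m - 1) + 1) := by
            rw [add_assoc]
            exact Nat.add_le_add h3 (Nat.add_le_add_right (by omega) 1)
        _ = m * (n - 1) + m := by rw [show (m - 1) + 1 = m from by omega]
        _ = m * n := h4
  have hinj : Function.Injective f := by
    rintro ⟨u1, j1⟩ ⟨u2, j2⟩ h
    simp only [hf] at h
    have h' : m * B j1.val + R u1.val j1.val = m * B j2.val + R u2.val j2.val :=
      Nat.add_right_cancel h
    obtain ⟨hBe, hRe⟩ := eucl_aux hm (hRlt _ _ u1.isLt j1.isLt) (hRlt _ _ u2.isLt j2.isLt) h'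
    have hj : j1 = j2 := Fin.ext (hBinj _ j1.isLt _ j2.isLt hBe)
    subst hj
    have hu : u1 = u2 := Fin.ext (hRinj _ j1.isLt _ u1.isLt _ u2.isLt hRe)
    rw [hu]
  have himg : Finset.image f Finset.univ = Finset.Icc 1 (m * n) := by
    apply Finset.eq_of_subset_of_card_le
    · intro y hy
      obtain ⟨x, -, rfl⟩ := Finset.mem_image.mp hy
      have := hmem x
      rw [Set.mem_Icc] at this
      exact Finset.mem_Icc.mpr this
    · rw [Finset.card_image_of_injective _ hinj, Nat.card_Icc]
      simp
  refine ⟨fun x _ => hmem x, hinj.injOn, ?_⟩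
  intro y hy
  rw [Set.mem_Icc] at hy
  have : y ∈ Finset.image f Finset.univ := by rw [himg]; exact Finset.mem_Icc.mpr hy
  obtain ⟨x, -, rfl⟩ := Finset.mem_image.mp this
  exact ⟨x, Set.mem_univ x, rfl⟩


lemma chiLD_eq_two_aux {m n : ℕ} (hm : 4 ≤ m) (hme : m % 2 = 0) (hn : 2 ≤ n)
    (f : Fin m × Fin n → ℕ) (P Q : ℕ) (hPQ : P ≠ Q)
    (hbij : Set.BijOn f Set.univ (Set.Icc 1 (m * n)))
    (hS : ∀ v : Fin m, ∑ j : Fin n, f (v, j) = if v.val % 2 = 0 then P else Q) :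
    chiLD (lexProd (SimpleGraph.cycleGraph m) (⊥ : SimpleGraph (Fin n))) = 2 := by
  haveI : NeZero m := ⟨by omega⟩
  haveI : NeZero n := ⟨by omega⟩
  set G := lexProd (SimpleGraph.cycleGraph m) (⊥ : SimpleGraph (Fin n)) with hG
  have hone : (1 : Fin m).val = 1 := by rw [Fin.val_one']; exact Nat.mod_eq_of_lt (by omega)
  have hadjG : ∀ x y : Fin m × Fin n, G.Adj x y ↔ (SimpleGraph.cycleGraph m).Adj x.1 y.1 := by
    intro x y
    constructor
    · rintro (h | ⟨-, h⟩)
      · exact h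
      · exact h.elim
    · intro h; exact Or.inl h
  have hadj2 : ∀ u v : Fin m, (SimpleGraph.cycleGraph m).Adj u v ↔ (v = u - 1 ∨ v = u + 1) := by
    intro u v
    rw [SimpleGraph.cycleGraph_adj']
    constructor
    · rintro (h | h)
      · left
        have h1 : u - v = 1 := Fin.ext (by rw [hone]; exact h)
        have h2 : u = 1 + v := eq_add_of_sub_eq h1
        rw [h2, add_comm, add_sub_cancel_right]
      · right
        have h1 : v - u = 1 := Fin.ext (by rw [hone]; exact h)
        have h2 : v = 1 + u := eq_add_of_sub_eq h1
        rw [h2, add_comm]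
    · rintro (rfl | rfl)
      · left; rw [sub_sub_cancel, hone]
      · right; rw [add_sub_cancel_left, hone]
  have hval1 : ∀ v : Fin m, (v + 1).val = (v.val + 1) % m := by
    intro v; rw [Fin.val_add, hone]
  have hparadd : ∀ v : Fin m, (v + 1).val % 2 ≠ v.val % 2 := by
    intro v
    rw [hval1]
    rcases Nat.lt_or_ge (v.val + 1) m with h | h
    · rw [Nat.mod_eq_of_lt h]; omega
    · have hv := v.isLt
      have heq : v.val + 1 = m := by omega
      rw [heq, Nat.mod_self]; omega
  have hpar : ∀ u : Fin m, (u - 1).val % 2 ≠ u.val % 2 := by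
    intro u
    have h1 : (u - 1) + 1 = u := sub_add_cancel u 1
    have h2 := hparadd (u - 1)
    rw [h1] at h2
    exact h2.symm
  have hval2 : ((1 : Fin m) + 1).val = 2 := by rw [Fin.val_add, hone]; exact Nat.mod_eq_of_lt (by omega)
  have hW : ∀ x : Fin m × Fin n, ldWeight G f x = if x.1.val % 2 = 0 then 2 * Q else 2 * P := by
    rintro ⟨u, i⟩
    have hne : (u : Fin m) - 1 ≠ u + 1 := by
      intro h
      have h1 : (u - 1) + 1 = u + 1 + 1 := by rw [h]
      rw [sub_add_cancel] at h1
      have h1' : u = u + (1 + 1) := h1.trans (add_assoc u 1 1)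
      have h0 : u + 0 = u + (1 + 1) := by rw [add_zero]; exact h1'
      have h3 := add_left_cancel h0
      have h4 := congrArg Fin.val h3
      rw [Fin.val_zero, hval2] at h4
      omega
    have hstep : ldWeight G f (u, i)
        = ∑ v : Fin m, if (SimpleGraph.cycleGraph m).Adj u v then (∑ j : Fin n, f (v, j)) else 0 := by
      rw [ldWeight, Fintype.sum_prod_type]
      refine Finset.sum_congr rfl fun v _ => ?_
      by_cases h : (SimpleGraph.cycleGraph m).Adj u v
      · rw [if_pos h]
        exact Finset.sum_congr rfl fun j _ => if_pos ((hadjG (u, i) (v, j)).mpr h)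
      · rw [if_neg h]
        exact Finset.sum_eq_zero fun j _ => if_neg (fun hadj => h ((hadjG _ _).mp hadj))
    have hsplit : (Finset.univ.filter (fun v => (SimpleGraph.cycleGraph m).Adj u v))
        = {u - 1, u + 1} := by
      ext v
      simp only [Finset.mem_filter, Finset.mem_univ, true_and, Finset.mem_insert,
        Finset.mem_singleton]
      exact hadj2 u v
    rw [hstep, ← Finset.sum_filter, hsplit, Finset.sum_pair hne, hS, hS]
    have hp1 := hpar u
    have hp2 := hparadd u
    by_cases hu : u.val % 2 = 0
    · rw [if_pos hu, if_neg (by omega), if_neg (by omega)]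
      ring
    · rw [if_neg hu, if_pos (by omega), if_pos (by omega)]
      ring
  have hcardV : Fintype.card (Fin m × Fin n) = m * n := by simp
  have hldal : IsLDAL G f := by
    constructor
    · rw [hcardV]
      exact hbij
    · intro x y hxy
      rw [hW x, hW y]
      have h1 : (SimpleGraph.cycleGraph m).Adj x.1 y.1 := (hadjG _ _).mp hxy
      have h2 : x.1.val % 2 ≠ y.1.val % 2 := by
        rcases (hadj2 _ _).mp h1 with h | h
        · rw [h]; exact (hpar x.1).symm
        · rw [h]; exact (hparadd x.1).symm
      by_cases hx : x.1.val % 2 = 0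
      · rw [if_pos hx, if_neg (by omega)]; omega
      · rw [if_neg hx, if_pos (by omega)]; omega
  have hq0 : ((0 : Fin m)).val % 2 = 0 := by rw [Fin.val_zero]
  have himg : Finset.univ.image (ldWeight G f) = {2 * Q, 2 * P} := by
    apply Finset.Subset.antisymm
    · intro w hw
      obtain ⟨x, -, rfl⟩ := Finset.mem_image.mp hw
      rw [hW x]
      by_cases hx : x.1.val % 2 = 0
      · rw [if_pos hx]; exact Finset.mem_insert_self _ _
      · rw [if_neg hx]; exact Finset.mem_insert_of_mem (Finset.mem_singleton_self _)
    · intro w hw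
      rcases Finset.mem_insert.mp hw with rfl | hw
      · refine Finset.mem_image.mpr ⟨((0 : Fin m), (0 : Fin n)), Finset.mem_univ _, ?_⟩
        rw [hW]
        simp [hq0]
      · rw [Finset.mem_singleton] at hw
        subst hw
        refine Finset.mem_image.mpr ⟨((1 : Fin m), (0 : Fin n)), Finset.mem_univ _, ?_⟩
        rw [hW]
        simp [Fin.val_one', Nat.mod_eq_of_lt (show 1 < m by omega)]
  have hcard2 : (Finset.univ.image (ldWeight G f)).card = 2 := by
    rw [himg]
    exact Finset.card_pair (by omega)
  have hmem2 : 2 ∈ {k | ∃ g : Fin m × Fin n → ℕ,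
      IsLDAL G g ∧ (Finset.univ.image (ldWeight G g)).card = k} := ⟨f, hldal, hcard2⟩
  have hlb : ∀ k ∈ {k | ∃ g : Fin m × Fin n → ℕ,
      IsLDAL G g ∧ (Finset.univ.image (ldWeight G g)).card = k}, 2 ≤ k := by
    rintro k ⟨g, hg, rfl⟩
    have hadj01 : G.Adj ((0 : Fin m), (0 : Fin n)) ((1 : Fin m), (0 : Fin n)) := by
      apply (hadjG _ _).mpr
      apply (hadj2 _ _).mpr
      right
      rw [zero_add]
    have hne := hg.2 hadj01
    exact Finset.one_lt_card.mpr ⟨_, Finset.mem_image_of_mem _ (Finset.mem_univ _), _,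
      Finset.mem_image_of_mem _ (Finset.mem_univ _), hne⟩
  rw [chiLD]
  exact le_antisymm (Nat.sInf_le hmem2) (le_csInf ⟨2, hmem2⟩ hlb)

theorem stmt_13 (n m : ℕ) (hn : 1 < n) (hm : 4 ≤ m) (hme : Even m) :
    chiLD (lexProd (SimpleGraph.cycleGraph m) (⊥ : SimpleGraph (Fin n))) = 2 := by
  have hm2 : m % 2 = 0 := Nat.even_iff.mp hme
  rcases Nat.even_or_odd n with hne | hno
  · -- n even
    have hn2 : n % 2 = 0 := Nat.even_iff.mp hne
    set B : ℕ → ℕ := fun j => if j = 0 then 0 else if j = 1 then n - 1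
      else if (j-2) % 2 = 0 then 1 + (j-2)/2 else n - 2 - (j-2)/2 with hB
    set R : ℕ → ℕ → ℕ := fun u j => if j = 0 then (if u % 2 = 0 then u + 1 else u - 1)
      else if j = 1 then m - 1 - u else if (j-2) % 2 = 0 then u else m - 1 - u with hR
    set CB : ℕ := ∑ j ∈ Finset.range n, m * B j with hCB
    set HH : ℕ := ((n-2)/2) * (m-1) with hHH
    apply chiLD_eq_two_aux hm hm2 (by omega)
      (fun x : Fin m × Fin n => m * B x.2.val + R x.1.val x.2.val + 1)
      (CB + n + HH + m) (CB + n + HH + (m-2)) (by omega)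
    · exact bijOn_of_BR (by omega) (by omega) B R
        (by intro j hj; simp only [hB]; split_ifs <;> omega)
        (by intro j1 h1 j2 h2 h; simp only [hB] at h; split_ifs at h <;> omega)
        (by intro u j hu hj; simp only [hR]; split_ifs <;> omega)
        (by intro j hj u1 h1 u2 h2 h; simp only [hR] at h; split_ifs at h <;> omega)
    · intro v
      have hv : v.val < m := v.isLt
      show (∑ j : Fin n, (m * B j.val + R v.val j.val + 1)) = _
      rw [Fin.sum_univ_eq_sum_range (fun j => m * B j + R v.val j + 1) n]
      rw [Finset.sum_add_distrib, Finset.sum_add_distrib, Finset.sum_const,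
        Finset.card_range, smul_eq_mul, mul_one, ← hCB]
      have hsplit : ∑ j ∈ Finset.range n, R v.val j
          = (if v.val % 2 = 0 then m else m - 2) + HH := by
        have hn' : 2 + 2 * ((n-2)/2) = n := by omega
        calc ∑ j ∈ Finset.range n, R v.val j
            = ∑ j ∈ Finset.range (2 + 2 * ((n-2)/2)), R v.val j := by rw [hn']
          _ = (∑ j ∈ Finset.range 2, R v.val j)
              + ∑ t ∈ Finset.range (2 * ((n-2)/2)), R v.val (2 + t) :=
            Finset.sum_range_add _ 2 _
          _ = (if v.val % 2 = 0 then m else m - 2) + HH := by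
            have e1 : ∑ j ∈ Finset.range 2, R v.val j
                = (if v.val % 2 = 0 then m else m - 2) := by
              simp only [Finset.sum_range_succ, Finset.sum_range_zero, hR]
              norm_num
              split_ifs <;> omega
            have e2 : ∑ t ∈ Finset.range (2 * ((n-2)/2)), R v.val (2 + t)
                = ((n-2)/2) * (m-1) := by
              apply sum_pairs
              intro s hs
              simp only [hR]
              split_ifs <;> first | contradiction | omega
            rw [e1, e2, hHH]
      rw [hsplit]
      split_ifs <;> omega
  · -- n odd
    have hn2 : n % 2 = 1 := Nat.odd_iff.mp hno
    set B : ℕ → ℕ := fun j => if j < 3 then j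
      else if (j-3) % 2 = 0 then 3 + (j-3)/2 else n - 1 - (j-3)/2 with hB
    set R : ℕ → ℕ → ℕ := fun u j => if j = 0 then u
      else if j < 3 then (if u % 2 = 0 then m/2 - 1 - u/2 else m - 1 - (u-1)/2)
      else if (j-3) % 2 = 0 then u else m - 1 - u with hR
    set CB : ℕ := ∑ j ∈ Finset.range n, m * B j with hCB
    set HH : ℕ := ((n-3)/2) * (m-1) with hHH
    apply chiLD_eq_two_aux hm hm2 (by omega)
      (fun x : Fin m × Fin n => m * B x.2.val + R x.1.val x.2.val + 1)
      (CB + n + HH + (m-2)) (CB + n + HH + (2*m-1)) (by omega)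
    · exact bijOn_of_BR (by omega) (by omega) B R
        (by intro j hj; simp only [hB]; split_ifs <;> omega)
        (by intro j1 h1 j2 h2 h; simp only [hB] at h; split_ifs at h <;> omega)
        (by intro u j hu hj; simp only [hR]; split_ifs <;> omega)
        (by intro j hj u1 h1 u2 h2 h; simp only [hR] at h; split_ifs at h <;> omega)
    · intro v
      have hv : v.val < m := v.isLt
      show (∑ j : Fin n, (m * B j.val + R v.val j.val + 1)) = _
      rw [Fin.sum_univ_eq_sum_range (fun j => m * B j + R v.val j + 1) n]
      rw [Finset.sum_add_distrib, Finset.sum_add_distrib, Finset.sum_const,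
        Finset.card_range, smul_eq_mul, mul_one, ← hCB]
      have hsplit : ∑ j ∈ Finset.range n, R v.val j
          = (if v.val % 2 = 0 then m - 2 else 2*m - 1) + HH := by
        have hn' : 3 + 2 * ((n-3)/2) = n := by omega
        calc ∑ j ∈ Finset.range n, R v.val j
            = ∑ j ∈ Finset.range (3 + 2 * ((n-3)/2)), R v.val j := by rw [hn']
          _ = (∑ j ∈ Finset.range 3, R v.val j)
              + ∑ t ∈ Finset.range (2 * ((n-3)/2)), R v.val (3 + t) :=
            Finset.sum_range_add _ 3 _
          _ = (if v.val % 2 = 0 then m - 2 else 2*m - 1) + HH := by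
            have e1 : ∑ j ∈ Finset.range 3, R v.val j
                = (if v.val % 2 = 0 then m - 2 else 2*m - 1) := by
              simp only [Finset.sum_range_succ, Finset.sum_range_zero, hR]
              norm_num
              split_ifs <;> omega
            have e2 : ∑ t ∈ Finset.range (2 * ((n-3)/2)), R v.val (3 + t)
                = ((n-3)/2) * (m-1) := by
              apply sum_pairs
              intro s hs
              simp only [hR]
              split_ifs <;> first | contradiction | omega
            rw [e1, e2, hHH]
      rw [hsplit]
      split_ifs <;> omega
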